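/- Let f : ℝ^n → ℝ be a continuous function. Then L_f(x) = ∞ at Lebesgue-almost every point x at which f is non-differentiable; equivalently, the set {x ∈ ℝ^n : f is not differentiable at x and L_f(x) < ∞} has Lebesgue measure zero. -/

import Mathlib

open MeasureTheory Metric Set Filter
open scoped ENNReal NNReal Topology RealInnerProductSpace

noncomputable section

/-- A unit vector `d` is a limit direction of `A` at `x`: there is a sequence of points of
`A \ {x}` converging to `x` whose normalized directions from `x` converge to `d`. -/
def IsLimitDirection {E : Type*} [NormedAddCommGroup E] [NormedSpace ℝ E]
    (A : Set E) (x d : E) : Prop :=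
  ‖d‖ = 1 ∧ ∃ y : ℕ → E, (∀ k, y k ∈ A ∧ y k ≠ x) ∧
    Tendsto y atTop (𝓝 x) ∧
    Tendsto (fun k => (‖y k - x‖)⁻¹ • (y k - x)) atTop (𝓝 d)

/-- `A` has a tangent line at `x`: the set of limit directions of `A` at `x` is `{v, -v}`
for some unit vector `v`. -/
def HasTangentLineAt {E : Type*} [NormedAddCommGroup E] [NormedSpace ℝ E]
    (A : Set E) (x : E) : Prop :=
  ∃ v : E, ‖v‖ = 1 ∧ {d | IsLimitDirection A x d} = {v, -v}

/-- Lower scaled oscillation of `f` at `x`, where `f` is regarded as a map defined on the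
metric space `A`:  `liminf_{r→0+} (sup_{y ∈ A, dist x y ≤ r} ‖f y - f x‖) / r`. -/
def lOscOn {E F : Type*} [PseudoMetricSpace E] [NormedAddCommGroup F]
    (f : E → F) (A : Set E) (x : E) : ℝ≥0∞ :=
  Filter.liminf
    (fun r : ℝ => (⨆ y ∈ {y ∈ A | dist x y ≤ r}, (‖f y - f x‖₊ : ℝ≥0∞)) / ENNReal.ofReal r)
    (𝓝[>] (0:ℝ))

/-- Upper scaled oscillation of `f` at `x`, where `f` is regarded as a map defined on the
metric space `A`:  `limsup_{r→0+} (sup_{y ∈ A, dist x y ≤ r} ‖f y - f x‖) / r`. -/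
def uOscOn {E F : Type*} [PseudoMetricSpace E] [NormedAddCommGroup F]
    (f : E → F) (A : Set E) (x : E) : ℝ≥0∞ :=
  Filter.limsup
    (fun r : ℝ => (⨆ y ∈ {y ∈ A | dist x y ≤ r}, (‖f y - f x‖₊ : ℝ≥0∞)) / ENNReal.ofReal r)
    (𝓝[>] (0:ℝ))

/-- The closed unit cube `[0,1]^n` in `ℝ^n`. -/
def unitCube (n : ℕ) : Set (EuclideanSpace ℝ (Fin n)) :=
  {x | ∀ i, x i ∈ Set.Icc (0:ℝ) 1}

/-- A set has σ-finite `s`-dimensional Hausdorff measure if it is a countable union of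
sets of finite `H^s` measure. -/
def SigmaFiniteH {E : Type*} [EMetricSpace E] [MeasurableSpace E] [BorelSpace E]
    (s : ℝ) (C : Set E) : Prop :=
  ∃ F : ℕ → Set E, C = ⋃ k, F k ∧ ∀ k, μH[s] (F k) < ⊤

/-- The Hausdorff measure associated to a gauge function `g`. -/
def gaugeHausdorff {E : Type*} [EMetricSpace E] [MeasurableSpace E] [BorelSpace E]
    (g : ℝ → ℝ) : Measure E :=
  Measure.mkMetric (fun d : ℝ≥0∞ => ENNReal.ofReal (g d.toReal))

/-- The hyperplane through `x` with normal vector `θ`. -/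
def hyperplaneThrough {E : Type*} [NormedAddCommGroup E] [InnerProductSpace ℝ E]
    (θ x : E) : Set E := {y | ⟪y - x, θ⟫ = 0}

/-- `x` is an isolated point of `A`. -/
def IsIsolatedIn {E : Type*} [PseudoMetricSpace E] (x : E) (A : Set E) : Prop :=
  x ∈ A ∧ ∃ r > 0, A ∩ Metric.ball x r = {x}

/-- Concatenation of two Euclidean vectors as a point of `ℝ^{n+m}`. -/
def concatPt {n m : ℕ} (x : EuclideanSpace ℝ (Fin n)) (y : EuclideanSpace ℝ (Fin m)) :
    EuclideanSpace ℝ (Fin (n + m)) :=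
  (EuclideanSpace.equiv (Fin (n + m)) ℝ).symm (Fin.append (fun i => x i) (fun j => y j))

/-- A point of `ℝ^{n+1}` given by a vector in `ℝ^n` and a last (vertical) coordinate. -/
def snocPt {n : ℕ} (x : EuclideanSpace ℝ (Fin n)) (t : ℝ) :
    EuclideanSpace ℝ (Fin (n + 1)) :=
  (EuclideanSpace.equiv (Fin (n + 1)) ℝ).symm (Fin.snoc (fun i => x i) t)

/-- Extract an explicit window from an eventually statement on `𝓝[>] 0`. -/
lemma eventually_nhdsGT_zero {P : ℝ → Prop} (h : ∀ᶠ r in 𝓝[>] (0:ℝ), P r) :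
    ∃ ε > 0, ∀ r : ℝ, 0 < r → r < ε → P r := by
  rw [eventually_nhdsWithin_iff, Metric.eventually_nhds_iff] at h
  obtain ⟨ε, hε, h⟩ := h
  exact ⟨ε, hε, fun r h1 h2 => h (by simpa [Real.dist_eq, abs_of_pos h1] using h2) h1⟩

/-- At a density point of `s`, every nearby point is well approximated by points of `s`. -/
lemma density_approx {n : ℕ} {s : Set (EuclideanSpace ℝ (Fin n))}
    {x : EuclideanSpace ℝ (Fin n)} (hxs : x ∈ s)
    (hd : Tendsto (fun r => volume (s ∩ closedBall x r) / volume (closedBall x r))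
        (𝓝[>] (0:ℝ)) (𝓝 1))
    {δ : ℝ} (hδ : 0 < δ) (hδ1 : δ ≤ 1) :
    ∃ r0 > 0, ∀ y, dist y x ≤ r0 → ∃ z ∈ s, dist z y ≤ δ * dist y x := by
  by_contra hcon
  push_neg at hcon
  set d := Module.finrank ℝ (EuclideanSpace ℝ (Fin n)) with hd_def
  set P := volume (ball (0:EuclideanSpace ℝ (Fin n)) 1) with hP_def
  have hP0 : P ≠ 0 := (measure_ball_pos _ _ one_pos).ne'
  have hPt : P ≠ ⊤ := measure_ball_lt_top.ne
  set η := ENNReal.ofReal ((δ/2)^d) with hη_def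
  have hη0 : η ≠ 0 := (ENNReal.ofReal_pos.2 (by positivity)).ne'
  have hηt : η ≠ ⊤ := ENNReal.ofReal_ne_top
  have h1η : (1:ℝ≥0∞) - η < 1 := ENNReal.sub_lt_self ENNReal.one_ne_top one_ne_zero hη0
  have hev := hd (Ioi_mem_nhds h1η)
  obtain ⟨ε, hε, hev⟩ := eventually_nhdsGT_zero hev
  obtain ⟨y, hyx, hsep⟩ := hcon (ε/5) (by positivity)
  set t := dist y x with ht_def
  have ht0 : 0 ≤ t := dist_nonneg
  rcases ht0.lt_or_eq with ht | ht
  · -- t > 0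
    have h2t0 : (0:ℝ) < 2*t := by linarith
    have h2tε : 2*t < ε := by linarith
    have hratio := hev (2*t) h2t0 h2tε
    set B := closedBall x (2*t) with hB_def
    set v := volume (closedBall y (δ*t)) with hv_def
    set V := volume B with hV_def
    have hvval : v = ENNReal.ofReal ((δ*t)^d) * P :=
      Measure.addHaar_closedBall volume y (by positivity)
    have hVval : V = ENNReal.ofReal ((2*t)^d) * P :=
      Measure.addHaar_closedBall volume x (by positivity)
    have hV0 : V ≠ 0 := by
      rw [hVval]
      exact mul_ne_zero (ENNReal.ofReal_pos.2 (by positivity)).ne' hP0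
    have hVt : V ≠ ⊤ := measure_closedBall_lt_top.ne
    have hsub : closedBall y (δ*t) ⊆ B := by
      intro w hw
      rw [mem_closedBall] at hw ⊢
      have := dist_triangle w y x
      nlinarith
    have hdisj : Disjoint (s ∩ B) (closedBall y (δ*t)) := by
      rw [Set.disjoint_left]
      intro w hw hw'
      rw [mem_closedBall] at hw'
      exact absurd (hsep w hw.1) (by linarith)
    have key : volume (s ∩ B) + v ≤ V := by
      rw [← measure_union hdisj measurableSet_closedBall]
      exact measure_mono (union_subset inter_subset_right hsub)
    have hvV : v / V = η := by
      rw [hvval, hVval, ENNReal.mul_div_mul_right _ _ hP0 hPt,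
        ← ENNReal.ofReal_div_of_pos (by positivity)]
      congr 1
      rw [← div_pow]
      congr 1
      field_simp
    have hle1 : volume (s ∩ B) / V + η ≤ 1 := by
      rw [← hvV, ENNReal.div_add_div_same]
      calc (volume (s ∩ B) + v) / V ≤ V / V := ENNReal.div_le_div_right key _
        _ = 1 := ENNReal.div_self hV0 hVt
    have hη1 : η ≤ 1 := le_trans le_add_self hle1
    have hgt : (1:ℝ≥0∞) < volume (s ∩ B) / V + η := by
      rw [mem_Ioi] at hratio
      rwa [ENNReal.sub_lt_iff_lt_right hηt hη1] at hratio
    exact absurd (lt_of_lt_of_le hgt hle1) (lt_irrefl _)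
  · -- t = 0 : y = x
    have hyx' : y = x := by
      have h2 : dist y x = 0 := ht.symm
      rwa [dist_eq_zero] at h2
    have h2 := hsep x hxs
    rw [hyx', dist_self] at h2
    rw [← ht] at h2
    simp at h2

set_option maxHeartbeats 1000000 in
/-- Upgrade differentiability of a Lipschitz extension to differentiability of `f`,
at a point which is well approximated by `s`, given a uniform local oscillation bound
centered at points of `s`. -/
lemma diff_of_approx {E : Type*} [NormedAddCommGroup E] [NormedSpace ℝ E]
    {f g : E → ℝ} {s : Set E} {x : E} {M ρ : ℝ} (hρ : 0 < ρ)
    (hfg : Set.EqOn f g s) (hxs : x ∈ s)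
    (happrox : ∀ δ : ℝ, 0 < δ → δ ≤ 1 →
      ∃ r0 > 0, ∀ y, dist y x ≤ r0 → ∃ z ∈ s, dist z y ≤ δ * dist y x)
    (hosc : ∀ z ∈ s, ∀ y, dist y z < ρ → |f y - f z| ≤ M * dist y z)
    (hg : DifferentiableAt ℝ g x) : DifferentiableAt ℝ f x := by
  set L := fderiv ℝ g x with hL_def
  have hgo := hg.hasFDerivAt.isLittleO
  rw [Asymptotics.isLittleO_iff] at hgo
  have : HasFDerivAt f L x := by
    apply HasFDerivAt.of_isLittleO
    rw [Asymptotics.isLittleO_iff]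
    intro c hc
    set D := |M| + ‖L‖ with hD_def
    have hD0 : 0 ≤ D := by positivity
    set δ := min 1 (c / (3 * (D + 1))) with hδ_def
    have hδ0 : 0 < δ := lt_min one_pos (by positivity)
    have hδ1 : δ ≤ 1 := min_le_left _ _
    have hδc : δ * (D + 1) ≤ c / 3 := by
      have h1 : δ ≤ c / (3 * (D + 1)) := min_le_right _ _
      have h2 : (0:ℝ) < D + 1 := by linarith
      calc δ * (D + 1) ≤ (c / (3 * (D + 1))) * (D + 1) := by
            exact mul_le_mul_of_nonneg_right h1 h2.le
        _ = c / 3 := by field_simp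
    obtain ⟨r0, hr0, happ⟩ := happrox δ hδ0 hδ1
    have h6 := hgo (show (0:ℝ) < c/6 by linarith)
    rw [Metric.eventually_nhds_iff] at h6
    obtain ⟨r1, hr1, h6⟩ := h6
    rw [Metric.eventually_nhds_iff]
    refine ⟨min r0 (min (r1/2) (ρ/2)), by positivity, fun y hy => ?_⟩
    set t := dist y x with ht_def
    have ht0 : 0 ≤ t := dist_nonneg
    have hty : t < min r0 (min (r1/2) (ρ/2)) := hy
    obtain ⟨z, hzs, hzy⟩ := happ y (le_of_lt (lt_of_lt_of_le hty (min_le_left _ _)))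
    have hδt : δ * t ≤ t := by nlinarith
    have hzy' : dist z y ≤ t := hzy.trans hδt
    have hzx : dist z x ≤ 2 * t := by
      have := dist_triangle z y x
      linarith
    have hzr1 : dist z x < r1 := by
      have : t < r1/2 := lt_of_lt_of_le hty ((min_le_right _ _).trans (min_le_left _ _))
      linarith
    have hyzρ : dist y z < ρ := by
      have h1 : t < ρ/2 := lt_of_lt_of_le hty ((min_le_right _ _).trans (min_le_right _ _))
      rw [dist_comm]
      linarith
    have hfx : f x = g x := hfg hxs
    have hfz : f z = g z := hfg hzs
    have e1 : |f y - f z| ≤ |M| * (δ * t) := by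
      have h1 := hosc z hzs y hyzρ
      have h2 : M * dist y z ≤ |M| * dist y z :=
        mul_le_mul_of_nonneg_right (le_abs_self M) dist_nonneg
      have h3 : |M| * dist y z ≤ |M| * (δ * t) := by
        apply mul_le_mul_of_nonneg_left _ (abs_nonneg M)
        rw [dist_comm]; exact hzy
      linarith
    have e2 : |g z - g x - L (z - x)| ≤ c/6 * (2 * t) := by
      have h1 := h6 hzr1
      rw [Real.norm_eq_abs] at h1
      have h2 : ‖z - x‖ = dist z x := (dist_eq_norm z x).symm
      rw [h2] at h1
      have : c/6 * dist z x ≤ c/6 * (2*t) :=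
        mul_le_mul_of_nonneg_left hzx (by linarith)
      linarith
    have e3 : |L (z - y)| ≤ ‖L‖ * (δ * t) := by
      have h1 : |L (z - y)| ≤ ‖L‖ * ‖z - y‖ := L.le_opNorm _
      have h2 : ‖z - y‖ = dist z y := (dist_eq_norm z y).symm
      rw [h2] at h1
      have : ‖L‖ * dist z y ≤ ‖L‖ * (δ * t) :=
        mul_le_mul_of_nonneg_left hzy (norm_nonneg L)
      linarith
    have hid : f y - f x - L (y - x)
        = (f y - f z) + (g z - g x - L (z - x)) + L (z - y) := by
      have hmap : L (z - y) = L (z - x) - L (y - x) := by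
        rw [← map_sub]; congr 1; abel
      rw [hfx, hfz, hmap]; ring
    rw [Real.norm_eq_abs, hid]
    have htot : |(f y - f z) + (g z - g x - L (z - x)) + L (z - y)|
        ≤ |f y - f z| + |g z - g x - L (z - x)| + |L (z - y)| := by
      calc _ ≤ |(f y - f z) + (g z - g x - L (z - x))| + |L (z - y)| := abs_add_le _ _
        _ ≤ _ := by gcongr; exact abs_add_le _ _
    have hnorm : ‖y - x‖ = t := (dist_eq_norm y x).symm
    rw [hnorm]
    have hfin : |M| * (δ * t) + c/6 * (2*t) + ‖L‖ * (δ * t) ≤ c * t := by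
      have hδD : δ * D ≤ c/3 := by nlinarith [hδ0.le, hδc]
      have h1 : δ * D * t ≤ (c/3) * t := mul_le_mul_of_nonneg_right hδD ht0
      have h2 : |M| * (δ * t) + ‖L‖ * (δ * t) = δ * D * t := by rw [hD_def]; ring
      nlinarith [hc.le, ht0]
    linarith
  exact this.differentiableAt


/-- The set of points where `f` has oscillation bounded by `M+1` at scales below `1/(M+1)`. -/
def ASet {n : ℕ} (f : EuclideanSpace ℝ (Fin n) → ℝ) (M : ℕ) :
    Set (EuclideanSpace ℝ (Fin n)) :=
  {x | ∀ y, dist y x < 1/(M+1 : ℝ) → |f y - f x| ≤ (M+1 : ℝ) * dist y x}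

lemma ASet_closed {n : ℕ} {f : EuclideanSpace ℝ (Fin n) → ℝ} (hf : Continuous f) (M : ℕ) :
    IsClosed (ASet f M) := by
  have : ASet f M = ⋂ y, ({x | 1/(M+1:ℝ) ≤ dist y x} ∪
      {x | |f y - f x| ≤ (M+1 : ℝ) * dist y x}) := by
    ext x
    simp only [ASet, mem_setOf_eq, mem_iInter, mem_union, mem_setOf_eq]
    constructor
    · intro h y
      rcases lt_or_ge (dist y x) (1/(M+1:ℝ)) with h' | h'
      · exact Or.inr (h y h')
      · exact Or.inl h'
    · intro h y hy
      rcases h y with h' | h'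
      · linarith
      · exact h'
  rw [this]
  refine isClosed_iInter fun y => IsClosed.union ?_ ?_
  · exact isClosed_le continuous_const (continuous_const.dist continuous_id)
  · apply isClosed_le
    · exact ((continuous_const.sub hf).abs)
    · exact continuous_const.mul (continuous_const.dist continuous_id)

lemma mem_ASet_of_uOsc {n : ℕ} {f : EuclideanSpace ℝ (Fin n) → ℝ}
    {x : EuclideanSpace ℝ (Fin n)} (h : uOscOn f Set.univ x < ⊤) :
    ∃ M : ℕ, x ∈ ASet f M := by
  set b := uOscOn f Set.univ x + 1 with hb_def
  have hbt : b ≠ ⊤ := by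
    rw [hb_def]
    exact ENNReal.add_ne_top.2 ⟨h.ne, ENNReal.one_ne_top⟩
  have hlt : uOscOn f Set.univ x < b := ENNReal.lt_add_right h.ne one_ne_zero
  rw [uOscOn] at hlt
  have hev := Filter.eventually_lt_of_limsup_lt hlt
  obtain ⟨ε, hε, hev⟩ := eventually_nhdsGT_zero hev
  set K := b.toReal with hK_def
  have hKb : ∀ y : EuclideanSpace ℝ (Fin n), 0 < dist x y → dist x y < ε →
      |f y - f x| ≤ K * dist x y := by
    intro y h1 h2
    have hr := hev (dist x y) h1 h2
    have hmem : y ∈ {y' ∈ Set.univ | dist x y' ≤ dist x y} := ⟨mem_univ y, le_rfl⟩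
    have hle : (‖f y - f x‖₊ : ℝ≥0∞) ≤
        ⨆ y' ∈ {y' ∈ Set.univ | dist x y' ≤ dist x y}, (‖f y' - f x‖₊ : ℝ≥0∞) :=
      le_biSup (fun y' => (‖f y' - f x‖₊ : ℝ≥0∞)) hmem
    rw [ENNReal.div_lt_iff (Or.inl (ENNReal.ofReal_pos.2 h1).ne') (Or.inl ENNReal.ofReal_ne_top)]
        at hr
    have hlt2 : (‖f y - f x‖₊ : ℝ≥0∞) ≤ b * ENNReal.ofReal (dist x y) := hle.trans hr.le
    have := ENNReal.toReal_mono (by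
        exact ENNReal.mul_ne_top hbt ENNReal.ofReal_ne_top) hlt2
    rwa [ENNReal.coe_toReal, coe_nnnorm, Real.norm_eq_abs, ENNReal.toReal_mul,
      ENNReal.toReal_ofReal dist_nonneg] at this
  obtain ⟨N, hN⟩ := exists_nat_ge (max K (1/ε))
  refine ⟨N, fun y hy => ?_⟩
  rcases eq_or_ne y x with rfl | hne
  · simp [mul_nonneg (by positivity) dist_nonneg]
  · have h1 : 0 < dist x y := dist_pos.2 (Ne.symm hne)
    have h2 : dist x y < ε := by
      rw [dist_comm] at hy
      have hNε : 1/ε ≤ N := le_trans (le_max_right _ _) hN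
      have : 1/(N+1:ℝ) < ε := by
        rw [div_lt_iff₀ (by positivity)]
        rw [div_le_iff₀ hε] at hNε
        nlinarith
      linarith
    have h3 := hKb y h1 h2
    have hKN : K ≤ (N:ℝ) + 1 := le_trans (le_trans (le_max_left _ _) hN) (by linarith)
    rw [dist_comm y x]
    calc |f y - f x| ≤ K * dist x y := h3
      _ ≤ ((N:ℝ)+1) * dist x y := mul_le_mul_of_nonneg_right hKN dist_nonneg

/-- (Corollary of Stepanov type) For a continuous `f : ℝ^n → ℝ`, the set of
points where `f` is non-differentiable and the upper scaled oscillation is finite has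
Lebesgue measure zero. -/
theorem stmt_5 (n : ℕ) (f : EuclideanSpace ℝ (Fin n) → ℝ) (hf : Continuous f) :
    volume {x : EuclideanSpace ℝ (Fin n) |
      ¬ DifferentiableAt ℝ f x ∧ uOscOn f Set.univ x < ⊤} = 0 := by
  classical
  set Bad := {x : EuclideanSpace ℝ (Fin n) |
      ¬ DifferentiableAt ℝ f x ∧ uOscOn f Set.univ x < ⊤} with hBad_def
  have hu : DenseRange (TopologicalSpace.denseSeq (EuclideanSpace ℝ (Fin n))) :=
    TopologicalSpace.denseRange_denseSeq _
  set u := TopologicalSpace.denseSeq (EuclideanSpace ℝ (Fin n)) with hu_def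
  set C : ℕ → ℕ → Set (EuclideanSpace ℝ (Fin n)) :=
    fun M j => ASet f M ∩ closedBall (u j) (1/(4*((M:ℝ)+1))) with hC_def
  have hcover : Bad ⊆ ⋃ (M : ℕ) (j : ℕ), Bad ∩ C M j := by
    intro x hx
    obtain ⟨hx1, hx2⟩ := hx
    obtain ⟨M, hM⟩ := mem_ASet_of_uOsc hx2
    obtain ⟨j, hj⟩ := hu.exists_dist_lt x (show (0:ℝ) < 1/(4*((M:ℝ)+1)) by positivity)
    exact mem_iUnion.2 ⟨M, mem_iUnion.2 ⟨j, ⟨hx1, hx2⟩, hM, le_of_lt hj⟩⟩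
  refine measure_mono_null hcover
    (measure_iUnion_null fun M => measure_iUnion_null fun j => ?_)
  have hCc : IsClosed (C M j) := (ASet_closed hf M).inter isClosed_closedBall
  have hLip : LipschitzOnWith ((M:ℝ≥0)+1) f (C M j) := by
    rw [lipschitzOnWith_iff_dist_le_mul]
    intro a ha b hb
    have hd : dist a b < 1/((M:ℝ)+1) := by
      have h1 : dist a (u j) ≤ 1/(4*((M:ℝ)+1)) := ha.2
      have h2 : dist b (u j) ≤ 1/(4*((M:ℝ)+1)) := hb.2
      have h3 := dist_triangle_right a b (u j)
      have h5 : 1/(4*((M:ℝ)+1)) + 1/(4*((M:ℝ)+1)) < 1/((M:ℝ)+1) := by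
        rw [← add_div, div_lt_div_iff₀ (by positivity) (by positivity)]
        nlinarith [Nat.cast_nonneg (α := ℝ) M]
      linarith
    have hb' := hb.1 a hd
    have hcast : ((((M:ℝ≥0)+1) : ℝ≥0) : ℝ) = (M:ℝ)+1 := by push_cast; ring
    rw [Real.dist_eq, hcast]
    exact hb'
  obtain ⟨g, hg_lip, hfg⟩ := hLip.extend_real
  have hdiffg : ∀ᵐ x ∂(volume : Measure (EuclideanSpace ℝ (Fin n))),
      DifferentiableAt ℝ g x := hg_lip.ae_differentiableAt
  have hdens := Besicovitch.ae_tendsto_measure_inter_div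
    (volume : Measure (EuclideanSpace ℝ (Fin n))) (C M j)
  have hae : ∀ᵐ x ∂(volume.restrict (C M j)), x ∈ C M j → DifferentiableAt ℝ f x := by
    filter_upwards [hdens, ae_restrict_of_ae hdiffg] with x hx1 hx2
    intro hxC
    refine diff_of_approx (show (0:ℝ) < 1/((M:ℝ)+1) by positivity) hfg hxC
      (fun δ hδ0 hδ1 => density_approx hxC hx1 hδ0 hδ1)
      (fun z hz y hy => hz.1 y hy) hx2
  have h0 : (volume.restrict (C M j)) {x | ¬ (x ∈ C M j → DifferentiableAt ℝ f x)} = 0 :=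
    ae_iff.1 hae
  have hsubset : Bad ∩ C M j ⊆ {x | ¬ (x ∈ C M j → DifferentiableAt ℝ f x)} := by
    intro x hx h'
    exact hx.1.1 (h' hx.2)
  refine le_antisymm ?_ (by simp)
  calc volume (Bad ∩ C M j) = volume ((Bad ∩ C M j) ∩ C M j) := by
        rw [inter_assoc, inter_self]
    _ ≤ (volume.restrict (C M j)) (Bad ∩ C M j) := Measure.le_restrict_apply _ _
    _ ≤ (volume.restrict (C M j)) {x | ¬ (x ∈ C M j → DifferentiableAt ℝ f x)} :=
        measure_mono hsubset
    _ = 0 := h0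


end
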